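/- Let y ∈ M_k and n ∈ ℕ. Then the block-diagonal matrix y ⊗ 1_n ∈ M_n(M_k) satisfies ‖y ⊗ 1_n‖_{p,n} ≤ ‖y‖_p (Schatten p-norm). -/

import Mathlib

open Matrix Kronecker ComplexOrder

/-- Schatten `p`-norm of a complex `k × k` matrix: `(∑ sᵢ^p)^(1/p)` where `sᵢ` are the
singular values (square roots of the eigenvalues of `aᴴ * a`). -/
noncomputable def sNorm (p : ℝ) {k : ℕ} (a : Matrix (Fin k) (Fin k) ℂ) : ℝ :=
  (∑ i, Real.sqrt ((Matrix.posSemidef_conjTranspose_mul_self a).1.eigenvalues i) ^ p) ^ (1 / p)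

/-- The block-matrix norm `‖x‖_{p,n}` on `M_n(M_k)` (modeled as matrices indexed by
`Fin k × Fin n`): infimum of `(1/2)(‖f‖_p + ‖g‖_p)` over positive semidefinite `f, g ∈ M_k`
such that `[[f ⊗ 1ₙ, x], [xᴴ, g ⊗ 1ₙ]]` is positive semidefinite. -/
noncomputable def blockNorm (p : ℝ) {k n : ℕ}
    (x : Matrix (Fin k × Fin n) (Fin k × Fin n) ℂ) : ℝ :=
  sInf { r : ℝ | ∃ f g : Matrix (Fin k) (Fin k) ℂ, f.PosSemidef ∧ g.PosSemidef ∧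
    (Matrix.fromBlocks (f ⊗ₖ (1 : Matrix (Fin n) (Fin n) ℂ)) x
      xᴴ (g ⊗ₖ (1 : Matrix (Fin n) (Fin n) ℂ))).PosSemidef ∧
    r = (1 / 2) * (sNorm p f + sNorm p g) }


lemma eig_congr {k : ℕ} {A B : Matrix (Fin k) (Fin k) ℂ} (h : A = B)
    (hA : A.IsHermitian) (hB : B.IsHermitian) : hA.eigenvalues = hB.eigenvalues := by
  subst h; rfl

lemma kron_conjTranspose {α β : Type*} [Fintype α] [Fintype β] [DecidableEq α] [DecidableEq β]
    (A : Matrix α α ℂ) (C : Matrix β β ℂ) : (A ⊗ₖ C)ᴴ = Aᴴ ⊗ₖ Cᴴ := by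
  ext ⟨i, j⟩ ⟨i', j'⟩
  simp [conjTranspose_apply, kroneckerMap_apply]

lemma kron_one_posSemidef {α β : Type*} [Fintype α] [Fintype β] [DecidableEq α] [DecidableEq β]
    {M : Matrix α α ℂ} (hM : M.PosSemidef) :
    (M ⊗ₖ (1 : Matrix β β ℂ)).PosSemidef := by
  obtain ⟨B, rfl⟩ : ∃ B : Matrix α α ℂ, M = Bᴴ * B := by
    open scoped MatrixOrder in
    exact CStarAlgebra.nonneg_iff_eq_star_mul_self.mp hM.nonneg
  have h : (Bᴴ * B) ⊗ₖ (1 : Matrix β β ℂ)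
      = (B ⊗ₖ (1 : Matrix β β ℂ))ᴴ * (B ⊗ₖ (1 : Matrix β β ℂ)) := by
    rw [kron_conjTranspose, conjTranspose_one, ← mul_kronecker_mul, Matrix.one_mul]
  rw [h]
  exact posSemidef_conjTranspose_mul_self _

lemma big_eq {k n : ℕ} (f g x x' : Matrix (Fin k) (Fin k) ℂ) :
    Matrix.fromBlocks (f ⊗ₖ (1 : Matrix (Fin n) (Fin n) ℂ)) (x ⊗ₖ (1 : Matrix (Fin n) (Fin n) ℂ))
      (x' ⊗ₖ (1 : Matrix (Fin n) (Fin n) ℂ)) (g ⊗ₖ (1 : Matrix (Fin n) (Fin n) ℂ))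
    = ((Matrix.fromBlocks f x x' g) ⊗ₖ (1 : Matrix (Fin n) (Fin n) ℂ)).submatrix
        (Equiv.sumProdDistrib (Fin k) (Fin k) (Fin n)).symm
        (Equiv.sumProdDistrib (Fin k) (Fin k) (Fin n)).symm := by
  ext i j
  rcases i with ⟨i, a⟩ | ⟨i, a⟩ <;> rcases j with ⟨j, b⟩ | ⟨j, b⟩ <;>
    simp [Matrix.fromBlocks, Equiv.sumProdDistrib, kroneckerMap_apply]


lemma det_smul_one_sub_eq {k : ℕ} {M : Matrix (Fin k) (Fin k) ℂ} (hM : M.IsHermitian) (z : ℂ) :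
    (z • (1 : Matrix (Fin k) (Fin k) ℂ) - M).det = ∏ i, (z - (hM.eigenvalues i : ℂ)) := by
  set U : Matrix (Fin k) (Fin k) ℂ := (Matrix.IsHermitian.eigenvectorUnitary hM : Matrix (Fin k) (Fin k) ℂ) with hU
  have h1 : U * star U = 1 := (Matrix.mem_unitaryGroup_iff).mp (Matrix.IsHermitian.eigenvectorUnitary hM).2
  have h2 : star U * U = 1 := (Matrix.mem_unitaryGroup_iff').mp (Matrix.IsHermitian.eigenvectorUnitary hM).2
  have key : z • (1 : Matrix (Fin k) (Fin k) ℂ) - M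
      = U * (z • (1 : Matrix (Fin k) (Fin k) ℂ) - diagonal (Complex.ofReal ∘ hM.eigenvalues)) * star U := by
    rw [Matrix.mul_sub, Matrix.sub_mul]
    congr 1
    · rw [Matrix.mul_smul, Matrix.mul_one, Matrix.smul_mul, h1]
    · exact hM.spectral_theorem
  rw [key, det_mul, det_mul, mul_comm, ← mul_assoc, ← det_mul, h2, det_one, one_mul]
  rw [smul_one_eq_diagonal, diagonal_sub, det_diagonal]
  rfl

lemma det_comm_sub {k : ℕ} (y : Matrix (Fin k) (Fin k) ℂ) (z : ℂ) :
    (z • (1 : Matrix (Fin k) (Fin k) ℂ) - y * yᴴ).det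
      = (z • (1 : Matrix (Fin k) (Fin k) ℂ) - yᴴ * y).det := by
  by_cases hz : z = 0
  · subst hz
    simp only [zero_smul, zero_sub, det_neg]
    rw [det_mul_comm]
  · have h1 : ∀ A B : Matrix (Fin k) (Fin k) ℂ,
        z • (1 : Matrix (Fin k) (Fin k) ℂ) - A * B = z • ((1 : Matrix (Fin k) (Fin k) ℂ) - (z⁻¹ • A) * B) := by
      intro A B
      rw [smul_sub, Matrix.smul_mul, smul_smul, mul_inv_cancel₀ hz, one_smul]
    rw [h1, h1, det_smul, det_smul, det_one_sub_mul_comm]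
    congr 2
    rw [Matrix.mul_smul, Matrix.smul_mul]

lemma sum_phi_eq {k : ℕ} {a b : Fin k → ℝ}
    (h : ∀ z : ℂ, ∏ i, (z - (a i : ℂ)) = ∏ i, (z - (b i : ℂ))) (φ : ℝ → ℝ) :
    ∑ i, φ (a i) = ∑ i, φ (b i) := by
  have hpq : (∏ i, (Polynomial.X - Polynomial.C (a i : ℂ)))
      = ∏ i, (Polynomial.X - Polynomial.C (b i : ℂ)) := by
    apply Polynomial.funext
    intro z
    simpa [Polynomial.eval_prod] using h z
  have hroots : (Finset.univ.val.map (fun i => (a i : ℂ)))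
      = (Finset.univ.val.map (fun i => (b i : ℂ))) := by
    have ha : (∏ i, (Polynomial.X - Polynomial.C (a i : ℂ))).roots
        = Finset.univ.val.map (fun i => (a i : ℂ)) := by
      rw [show (∏ i, (Polynomial.X - Polynomial.C (a i : ℂ)))
          = ((Finset.univ.val.map (fun i => (a i : ℂ))).map
              (fun r => Polynomial.X - Polynomial.C r)).prod by
        rw [Multiset.map_map]; rfl]
      exact Polynomial.roots_multiset_prod_X_sub_C _
    have hb : (∏ i, (Polynomial.X - Polynomial.C (b i : ℂ))).roots
        = Finset.univ.val.map (fun i => (b i : ℂ)) := by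
      rw [show (∏ i, (Polynomial.X - Polynomial.C (b i : ℂ)))
          = ((Finset.univ.val.map (fun i => (b i : ℂ))).map
              (fun r => Polynomial.X - Polynomial.C r)).prod by
        rw [Multiset.map_map]; rfl]
      exact Polynomial.roots_multiset_prod_X_sub_C _
    rw [← ha, ← hb, hpq]
  have := congrArg (fun m : Multiset ℂ => ((m.map (fun z => φ z.re)).sum)) hroots
  simpa [Multiset.map_map, Function.comp_def, Finset.sum] using this


lemma exists_fg {k : ℕ} (y : Matrix (Fin k) (Fin k) ℂ) :
    ∃ f g : Matrix (Fin k) (Fin k) ℂ, f.PosSemidef ∧ g.PosSemidef ∧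
      (Matrix.fromBlocks f y yᴴ g).PosSemidef ∧ fᴴ * f = y * yᴴ ∧ gᴴ * g = yᴴ * y := by
  classical
  have hB : (yᴴ * y).IsHermitian := isHermitian_conjTranspose_mul_self y
  set lam : Fin k → ℝ := hB.eigenvalues with hlam
  have hlnn : ∀ i, 0 ≤ lam i := fun i => (posSemidef_conjTranspose_mul_self y).eigenvalues_nonneg i
  set U : Matrix (Fin k) (Fin k) ℂ := (Matrix.IsHermitian.eigenvectorUnitary hB : Matrix (Fin k) (Fin k) ℂ) with hUdef
  have hUU : U * Uᴴ = 1 := by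
    have := (Matrix.mem_unitaryGroup_iff).mp (Matrix.IsHermitian.eigenvectorUnitary hB).2
    simpa [Matrix.star_eq_conjTranspose] using this
  have hUU' : Uᴴ * U = 1 := by
    have := (Matrix.mem_unitaryGroup_iff').mp (Matrix.IsHermitian.eigenvectorUnitary hB).2
    simpa [Matrix.star_eq_conjTranspose] using this
  have hspec : yᴴ * y = U * diagonal (Complex.ofReal ∘ lam) * Uᴴ := by
    have := hB.spectral_theorem
    simpa [Matrix.star_eq_conjTranspose] using this
  have hA1 : ∀ X : Matrix (Fin k) (Fin k) ℂ, Uᴴ * (U * X) = X := by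
    intro X; rw [← Matrix.mul_assoc, hUU', Matrix.one_mul]
  have hdd : ∀ (a b : Fin k → ℂ) (X : Matrix (Fin k) (Fin k) ℂ),
      diagonal a * (diagonal b * X) = diagonal (fun i => a i * b i) * X := by
    intro a b X; rw [← Matrix.mul_assoc, diagonal_mul_diagonal]
  have hyyUX : ∀ X : Matrix (Fin k) (Fin k) ℂ,
      yᴴ * (y * (U * X)) = U * (diagonal (Complex.ofReal ∘ lam) * X) := by
    intro X
    calc yᴴ * (y * (U * X)) = (yᴴ * y) * (U * X) := by rw [Matrix.mul_assoc]
    _ = U * diagonal (Complex.ofReal ∘ lam) * (Uᴴ * (U * X)) := by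
        rw [hspec]; simp only [Matrix.mul_assoc]
    _ = U * (diagonal (Complex.ofReal ∘ lam) * X) := by rw [hA1, Matrix.mul_assoc]
  -- the indicator of the kernel
  set c : Fin k → ℂ := fun i => if lam i = 0 then 1 else 0 with hc
  set e : Fin k → ℂ := fun i => if lam i = 0 then 0 else 1 with he
  have hZ : y * (U * diagonal c) = 0 := by
    rw [← Matrix.conjTranspose_mul_self_eq_zero]
    have expand : (y * (U * diagonal c))ᴴ * (y * (U * diagonal c))
        = diagonal (star c) * (Uᴴ * (yᴴ * (y * (U * diagonal c)))) := by
      simp only [conjTranspose_mul, diagonal_conjTranspose, Matrix.mul_assoc]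
    rw [expand, hyyUX, hA1, hdd, diagonal_mul_diagonal]
    have h2 : (fun i => star c i * (Complex.ofReal ∘ lam) i * c i) = fun _ => (0 : ℂ) := by
      funext i
      by_cases h : lam i = 0 <;> simp [hc, h]
    rw [h2, diagonal_zero]
  have hYe : y * (U * (diagonal e * Uᴴ)) = y := by
    have h1 : diagonal e = 1 - diagonal c := by
      ext i j
      rcases eq_or_ne i j with rfl | hij
      · by_cases h : lam i = 0 <;>
          simp [Matrix.sub_apply, Matrix.one_apply, he, hc, h]
      · simp [Matrix.sub_apply, Matrix.one_apply_ne hij, diagonal_apply_ne _ hij]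
    rw [h1, Matrix.sub_mul, Matrix.one_mul, Matrix.mul_sub, hUU, Matrix.mul_sub, Matrix.mul_one]
    rw [← Matrix.mul_assoc, ← Matrix.mul_assoc, Matrix.mul_assoc y U (diagonal c), hZ,
      Matrix.zero_mul, sub_zero]
  -- the four building functions
  set dI : Fin k → ℂ := fun i => ((if lam i = 0 then 0 else (Real.sqrt (lam i))⁻¹ : ℝ) : ℂ) with hdI
  set aC : Fin k → ℂ := fun i => ((Real.sqrt (if lam i = 0 then 0 else (Real.sqrt (lam i))⁻¹) : ℝ) : ℂ) with haC
  set bC : Fin k → ℂ := fun i => ((Real.sqrt (Real.sqrt (lam i)) : ℝ) : ℂ) with hbC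
  set sC : Fin k → ℂ := fun i => ((Real.sqrt (lam i) : ℝ) : ℂ) with hsC
  set g : Matrix (Fin k) (Fin k) ℂ := U * diagonal sC * Uᴴ with hg
  set f : Matrix (Fin k) (Fin k) ℂ := y * (U * diagonal dI * Uᴴ) * yᴴ with hf
  -- positivity of f, g
  have hgPSD : g.PosSemidef := by
    have hd : (diagonal sC).PosSemidef := by
      rw [posSemidef_diagonal_iff]
      intro i
      simp only [hsC]
      rw [Complex.zero_le_real]
      positivity
    have := hd.mul_mul_conjTranspose_same U
    simpa [hg, Matrix.star_eq_conjTranspose] using this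
  have hfPSD : f.PosSemidef := by
    have hd : (diagonal dI).PosSemidef := by
      rw [posSemidef_diagonal_iff]
      intro i
      simp only [hdI]
      rw [Complex.zero_le_real]
      by_cases h : lam i = 0 <;> simp [h] <;> positivity
    have hinner : (U * diagonal dI * Uᴴ).PosSemidef := by
      have := hd.mul_mul_conjTranspose_same U
      simpa [Matrix.star_eq_conjTranspose] using this
    have := hinner.mul_mul_conjTranspose_same y
    simpa [hf, Matrix.star_eq_conjTranspose] using this
  -- g * g = yᴴ * y
  have hgg : g * g = yᴴ * y := by
    rw [hg, hspec]
    simp only [Matrix.mul_assoc]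
    rw [hA1, hdd]
    have hfun : (fun i => sC i * sC i) = Complex.ofReal ∘ lam := by
      funext i
      show ((Real.sqrt (lam i) : ℂ)) * ((Real.sqrt (lam i) : ℂ)) = _
      rw [← Complex.ofReal_mul, Real.mul_self_sqrt (hlnn i)]
      rfl
    rw [hfun]
  have hff : f * f = y * yᴴ := by
    rw [hf]
    simp only [Matrix.mul_assoc]
    rw [hyyUX, hA1, hdd, hdd]
    have hfun2 : (fun i => dI i * (Complex.ofReal ∘ lam) i * dI i) = e := by
      funext i
      simp only [hdI, he, Function.comp_apply]
      by_cases h : lam i = 0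
      · simp [h]
      · have hs : Real.sqrt (lam i) ≠ 0 :=
          Real.sqrt_ne_zero'.mpr (lt_of_le_of_ne (hlnn i) (Ne.symm h))
        rw [if_neg h, if_neg h, ← Complex.ofReal_mul, ← Complex.ofReal_mul,
          show (Real.sqrt (lam i))⁻¹ * lam i * (Real.sqrt (lam i))⁻¹
            = lam i / (Real.sqrt (lam i) * Real.sqrt (lam i)) by ring,
          Real.mul_self_sqrt (hlnn i), div_self h, Complex.ofReal_one]
    rw [hfun2]
    calc y * (U * (diagonal e * (Uᴴ * yᴴ))) = y * (U * (diagonal e * Uᴴ)) * yᴴ := by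
          simp only [Matrix.mul_assoc]
    _ = y * yᴴ := by rw [hYe]
  -- block decomposition
  have hAAt : (y * (U * diagonal aC)) * (y * (U * diagonal aC))ᴴ = f := by
    rw [hf]
    simp only [conjTranspose_mul, diagonal_conjTranspose, Matrix.mul_assoc]
    rw [hdd]
    have hfun3 : (fun i => aC i * star aC i) = dI := by
      funext i
      simp only [haC, hdI, Pi.star_apply, Complex.star_def, Complex.conj_ofReal]
      rw [← Complex.ofReal_mul, Real.mul_self_sqrt]
      by_cases h : lam i = 0
      · simp [h]
      · rw [if_neg h]
        positivity
    rw [hfun3]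
  have hBBt : (U * diagonal bC) * (U * diagonal bC)ᴴ = g := by
    rw [hg]
    simp only [conjTranspose_mul, diagonal_conjTranspose, Matrix.mul_assoc]
    rw [hdd]
    have hfun4 : (fun i => bC i * star bC i) = sC := by
      funext i
      simp only [hbC, hsC, Pi.star_apply, Complex.star_def, Complex.conj_ofReal]
      rw [← Complex.ofReal_mul, Real.mul_self_sqrt (Real.sqrt_nonneg _)]
    rw [hfun4]
  have hABt : (y * (U * diagonal aC)) * (U * diagonal bC)ᴴ = y := by
    simp only [conjTranspose_mul, diagonal_conjTranspose, Matrix.mul_assoc]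
    rw [hdd]
    have hfun5 : (fun i => aC i * star bC i) = e := by
      funext i
      simp only [haC, hbC, he, Pi.star_apply, Complex.star_def, Complex.conj_ofReal]
      by_cases h : lam i = 0
      · simp [h]
      · have hs : Real.sqrt (lam i) ≠ 0 :=
          Real.sqrt_ne_zero'.mpr (lt_of_le_of_ne (hlnn i) (Ne.symm h))
        rw [if_neg h, if_neg h, ← Complex.ofReal_mul,
          ← Real.sqrt_mul (by positivity) (Real.sqrt (lam i)),
          inv_mul_cancel₀ hs, Real.sqrt_one, Complex.ofReal_one]
    rw [hfun5]
    exact hYe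
  have hBAt : (U * diagonal bC) * (y * (U * diagonal aC))ᴴ = yᴴ := by
    have := congrArg conjTranspose hABt
    simpa only [conjTranspose_mul, conjTranspose_conjTranspose] using this
  have hN : (Matrix.fromBlocks (y * (U * diagonal aC)) 0 (U * diagonal bC) 0)
      * (Matrix.fromBlocks (y * (U * diagonal aC)) 0 (U * diagonal bC) 0)ᴴ
      = Matrix.fromBlocks f y yᴴ g := by
    rw [fromBlocks_conjTranspose, fromBlocks_multiply]
    simp only [Matrix.mul_zero, Matrix.zero_mul, add_zero, conjTranspose_zero, zero_add,
      Matrix.mul_zero]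
    rw [hAAt, hBBt, hABt, hBAt]
  have hBlock : (Matrix.fromBlocks f y yᴴ g).PosSemidef := by
    rw [← hN]
    exact posSemidef_self_mul_conjTranspose _
  refine ⟨f, g, hfPSD, hgPSD, hBlock, ?_, ?_⟩
  · rw [hfPSD.1]
    exact hff
  · rw [hgPSD.1]
    exact hgg


set_option maxHeartbeats 1000000 in
lemma sNorm_nonneg (p : ℝ) {k : ℕ} (a : Matrix (Fin k) (Fin k) ℂ) : 0 ≤ sNorm p a :=
  Real.rpow_nonneg
    (Finset.sum_nonneg fun i _ => Real.rpow_nonneg (Real.sqrt_nonneg _) p) _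

set_option maxHeartbeats 1000000 in
/-- Let `y ∈ M_k` and `n ∈ ℕ`. Then the block-diagonal matrix `y ⊗ 1ₙ ∈ M_n(M_k)`
satisfies `‖y ⊗ 1ₙ‖_{p,n} ≤ ‖y‖_p` (Schatten `p`-norm). -/
theorem stmt_16 {k : ℕ} (n : ℕ) (p : ℝ) (hp : 1 ≤ p)
    (y : Matrix (Fin k) (Fin k) ℂ) :
    blockNorm p (y ⊗ₖ (1 : Matrix (Fin n) (Fin n) ℂ)) ≤ sNorm p y := by
  classical
  obtain ⟨f, g, hf, hg, hblock, hffy, hggy⟩ := exists_fg y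
  have hsf : sNorm p f = sNorm p y := by
    unfold sNorm
    rw [eig_congr hffy (Matrix.posSemidef_conjTranspose_mul_self f).1
      (Matrix.posSemidef_self_mul_conjTranspose y).1]
    congr 1
    refine sum_phi_eq (fun z => ?_) (fun t => Real.sqrt t ^ p)
    rw [← det_smul_one_sub_eq (Matrix.posSemidef_self_mul_conjTranspose y).1 z,
      ← det_smul_one_sub_eq (Matrix.posSemidef_conjTranspose_mul_self y).1 z]
    exact det_comm_sub y z
  have hsg : sNorm p g = sNorm p y := by
    unfold sNorm
    rw [eig_congr hggy (Matrix.posSemidef_conjTranspose_mul_self g).1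
      (Matrix.posSemidef_conjTranspose_mul_self y).1]
  unfold blockNorm
  apply csInf_le
  · refine ⟨0, fun r hr => ?_⟩
    obtain ⟨f', g', _, _, _, rfl⟩ := hr
    have h1 : 0 ≤ sNorm p f' := sNorm_nonneg _ _
    have h2 : 0 ≤ sNorm p g' := sNorm_nonneg _ _
    linarith
  · refine ⟨f, g, hf, hg, ?_, ?_⟩
    · rw [kron_conjTranspose, conjTranspose_one, big_eq]
      exact Matrix.PosSemidef.submatrix (kron_one_posSemidef hblock)
        (fun i => (Equiv.sumProdDistrib (Fin k) (Fin k) (Fin n)).symm i)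
    · rw [hsf, hsg]
      ring
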